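/- arXiv:2108.09001 — 3 statements merged into one kernel-verified Lean document; each statement's English description precedes it below -/
import Mathlib

section
/- Let positive reals D_L, D_2, D_3, D_4, D_6, D_6', D_8, D_{12}, D_{12}', D_{12}'' satisfy: D_L D_2^2 = D_{12}' D_8^2, D_{12}'' = D_6' D_4^2, D_L D_6'^2 = D_{12} D_{12}' D_{12}'', and D_{12} D_3^2 = D_6^2 D_6'. Then D_6/D_3 = D_8/(D_4 D_2) = D_{12} D_4 D_2 / (D_8 D_6'). -/
/-- Lemma 3.2: the candidate conductors for tori with splitting group `A₄ × C₂` agree. -/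
theorem conductor_A4xC2 (DL D2 D3 D4 D6 D6' D8 D12 D12' D12'' : ℝ)
    (hDL : 0 < DL) (hD2 : 0 < D2) (hD3 : 0 < D3) (hD4 : 0 < D4)
    (hD6 : 0 < D6) (hD6' : 0 < D6') (hD8 : 0 < D8)
    (hD12 : 0 < D12) (hD12' : 0 < D12') (hD12'' : 0 < D12'')
    (h1 : DL * D2 ^ 2 = D12' * D8 ^ 2)
    (h2 : D12'' = D6' * D4 ^ 2)
    (h3 : DL * D6' ^ 2 = D12 * D12' * D12'')
    (h4 : D12 * D3 ^ 2 = D6 ^ 2 * D6') :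
    D6 / D3 = D8 / (D4 * D2) ∧ D8 / (D4 * D2) = D12 * D4 * D2 / (D8 * D6') := by
  have e : (DL * D6') * (D8 ^ 2 * D6') = (DL * D6') * (D12 * D2 ^ 2 * D4 ^ 2) := by
    have t : DL * D6' ^ 2 * D8 ^ 2 = D12 * (D12' * D8 ^ 2) * D12'' := by rw [h3]; ring
    rw [← h1, h2] at t
    linarith [t, (by ring : DL * D6' ^ 2 * D8 ^ 2 = (DL * D6') * (D8 ^ 2 * D6')),
      (by ring : D12 * (DL * D2 ^ 2) * (D6' * D4 ^ 2) = (DL * D6') * (D12 * D2 ^ 2 * D4 ^ 2))]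
  have key : D8 ^ 2 * D6' = D12 * D2 ^ 2 * D4 ^ 2 :=
    mul_left_cancel₀ (by positivity) e
  have e2 : D6' * (D6 ^ 2 * (D4 * D2) ^ 2) = D6' * (D8 ^ 2 * D3 ^ 2) := by
    calc D6' * (D6 ^ 2 * (D4 * D2) ^ 2) = (D6 ^ 2 * D6') * (D2 ^ 2 * D4 ^ 2) := by ring
    _ = (D12 * D3 ^ 2) * (D2 ^ 2 * D4 ^ 2) := by rw [h4]
    _ = (D12 * D2 ^ 2 * D4 ^ 2) * D3 ^ 2 := by ring
    _ = (D8 ^ 2 * D6') * D3 ^ 2 := by rw [key]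
    _ = D6' * (D8 ^ 2 * D3 ^ 2) := by ring
  have keysq : (D6 * (D4 * D2)) ^ 2 = (D8 * D3) ^ 2 := by
    have := mul_left_cancel₀ hD6'.ne' e2
    nlinarith [this]
  have h6 : D6 * (D4 * D2) = D8 * D3 := by
    have := abs_eq_abs.mp ((sq_eq_sq_iff_abs_eq_abs _ _).mp keysq)
    rcases this with h | h
    · exact h
    · nlinarith [h, mul_pos hD6 (mul_pos hD4 hD2), mul_pos hD8 hD3]
  constructor
  · field_simp
    linarith [h6]
  · field_simp
    nlinarith [key]
end

section
/- Let positive reals D_3, D_4, D_6'', D_6''', D_6'''', D_{12}'' and also D_2, D_8, D_6, D_{12} satisfy: D_6'''' = D_3 D_4, D_{12}'' D_3^2 = D_6'' D_6''' D_6'''', D_{12}'' D_2 = D_8 D_6''', and D_{12}/D_6 = D_{12}''/D_6'''. Then D_6''/D_3 = D_8/(D_4 D_2) = D_{12}/(D_6 D_4). -/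
/-- Lemma 3.4: equality of three conductor expressions for tori with splitting group `S₄`. -/
theorem conductor_S4_lem3d (D3 D4 D6'' D6''' D6'''' D12'' D2 D8 D6 D12 : ℝ)
    (hD3 : 0 < D3) (hD4 : 0 < D4) (hD6'' : 0 < D6'') (hD6''' : 0 < D6''')
    (hD6'''' : 0 < D6'''') (hD12'' : 0 < D12'') (hD2 : 0 < D2)
    (hD8 : 0 < D8) (hD6 : 0 < D6) (hD12 : 0 < D12)
    (h1 : D6'''' = D3 * D4)
    (h2 : D12'' * D3 ^ 2 = D6'' * D6''' * D6'''')
    (h3 : D12'' * D2 = D8 * D6''')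
    (h4 : D12 / D6 = D12'' / D6''') :
    D6'' / D3 = D8 / (D4 * D2) ∧ D8 / (D4 * D2) = D12 / (D6 * D4) := by
  have h4' : D12 * D6''' = D12'' * D6 := by
    field_simp at h4; linarith
  have key : D12'' * D3 = D6'' * D6''' * D4 := by
    have := h2
    rw [h1] at this
    have h3ne : D3 ≠ 0 := hD3.ne'
    nlinarith [this]
  constructor
  · rw [div_eq_div_iff hD3.ne' (by positivity)]
    nlinarith [key, h3, mul_pos hD4 hD2]
  · rw [div_eq_div_iff (by positivity : (D4*D2:ℝ) ≠ 0) (by positivity)]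
    have h5 : D12 * D2 * D6''' = D8 * D6 * D6''' := by
      linear_combination D6 * h3 + D2 * h4'
    have h6 := mul_right_cancel₀ hD6'''.ne' h5
    linear_combination -D4 * h6
end

section
/- Let positive reals D_L, D_2, D_2', D_2'', D_4, D_4'', D_6', D_8, D_8', D_8''', D_{12}, D_{12}'', D_{16}, D_{24}, D_{24}', D_{24}'' satisfy: D_L D_4''^2 = D_{24}'' D_{16}^2, D_{24} D_2''^2 = D_{12}'' D_8'''^2, D_L D_{12}''^2 = D_{24} D_{24}' D_{24}'', D_{24}' D_6'^2 = D_{12}^2 D_{12}'', D_{16} D_4^2 = D_8 D_8' D_8''', and D_4'' = D_2 D_2' D_2''. Then (D_8/(D_4 D_2))^2 = (D_{12} D_4 D_2' / (D_8' D_6'))^2, hence D_8/(D_4 D_2) = D_{12} D_4 D_2' / (D_8' D_6'). -/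
/-- Second part of Lemma 3.5: conductor expressions for tori with splitting group `S₄ × C₂`. -/
theorem conductor_S4xC2_part2
    (DL D2 D2' D2'' D4 D4'' D6' D8 D8' D8''' D12 D12'' D16 D24 D24' D24'' : ℝ)
    (hDL : 0 < DL) (hD2 : 0 < D2) (hD2' : 0 < D2') (hD2'' : 0 < D2'')
    (hD4 : 0 < D4) (hD4'' : 0 < D4'') (hD6' : 0 < D6') (hD8 : 0 < D8)
    (hD8' : 0 < D8') (hD8''' : 0 < D8''') (hD12 : 0 < D12) (hD12'' : 0 < D12'')
    (hD16 : 0 < D16) (hD24 : 0 < D24) (hD24' : 0 < D24') (hD24'' : 0 < D24'')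
    (h1 : DL * D4'' ^ 2 = D24'' * D16 ^ 2)
    (h2 : D24 * D2'' ^ 2 = D12'' * D8''' ^ 2)
    (h3 : DL * D12'' ^ 2 = D24 * D24' * D24'')
    (h4 : D24' * D6' ^ 2 = D12 ^ 2 * D12'')
    (h5 : D16 * D4 ^ 2 = D8 * D8' * D8''')
    (h6 : D4'' = D2 * D2' * D2'') :
    (D8 / (D4 * D2)) ^ 2 = (D12 * D4 * D2' / (D8' * D6')) ^ 2 ∧
      D8 / (D4 * D2) = D12 * D4 * D2' / (D8' * D6') := by
  have e1 : D24'' * (D24 * D24' * D4'' ^ 2) = D24'' * (D16 ^ 2 * D12'' ^ 2) := by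
    linear_combination D12'' ^ 2 * h1 - D4'' ^ 2 * h3
  have e1' := mul_left_cancel₀ hD24''.ne' e1
  have e2 : D12'' ^ 2 * (D16 ^ 2 * D2'' ^ 2 * D6' ^ 2)
      = D12'' ^ 2 * (D8''' ^ 2 * D12 ^ 2 * D4'' ^ 2) := by
    linear_combination (-(D2'' ^ 2 * D6' ^ 2)) * e1' + (D4'' ^ 2 * D24' * D6' ^ 2) * h2
      + (D4'' ^ 2 * D12'' * D8''' ^ 2) * h4
  have e2' := mul_left_cancel₀ (pow_ne_zero 2 hD12''.ne') e2
  have esq : (D16 * D2'' * D6') ^ 2 = (D8''' * D12 * D4'') ^ 2 := by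
    linear_combination e2'
  have key : D16 * D2'' * D6' = D8''' * D12 * D4'' := by
    exact (sq_eq_sq₀ (by positivity) (by positivity)).mp esq
  have key2 : D2'' * (D16 * D6') = D2'' * (D8''' * D12 * D2 * D2') := by
    linear_combination key + D8''' * D12 * h6
  have key2' := mul_left_cancel₀ hD2''.ne' key2
  have key3 : D8''' * (D8 * D8' * D6') = D8''' * (D12 * D2 * D2' * D4 ^ 2) := by
    linear_combination (-D6') * h5 + D4 ^ 2 * key2'
  have key3' := mul_left_cancel₀ hD8'''.ne' key3
  have hfin : D8 / (D4 * D2) = D12 * D4 * D2' / (D8' * D6') := by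
    field_simp
    linear_combination key3'
  exact ⟨by rw [hfin], hfin⟩
end
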